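/- arXiv:math-ph/0611057 — 3 statements merged into one kernel-verified Lean document; each statement's English description precedes it below -/
import Mathlib

section
/- If T : M_d → M_d is a positive trace-preserving linear map, then the determinant of T (as a linear map on the d²-dimensional complex vector space M_d) is a real number lying in the interval [−1, 1]. -/
open Matrix
open scoped Kronecker ComplexOrder

noncomputable section

/-- `Mat d` is the space `M_d` of `d × d` complex matrices. -/
abbrev Mat (d : ℕ) := Matrix (Fin d) (Fin d) ℂ

/-- A linear map on `M_d` is trace-preserving if it preserves the trace. -/
def IsTracePreserving {d : ℕ} (T : Mat d →ₗ[ℂ] Mat d) : Prop :=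
  ∀ A : Mat d, (T A).trace = A.trace

/-- A linear map on `M_d` is positive if it maps positive semidefinite matrices to
positive semidefinite matrices. -/
def IsPositiveMap {d : ℕ} (T : Mat d →ₗ[ℂ] Mat d) : Prop :=
  ∀ A : Mat d, A.PosSemidef → (T A).PosSemidef

/-- compatibility: the complex absolute value as an `AbsoluteValue`. -/
def Complex.abs : AbsoluteValue ℂ ℝ := NormedField.toAbsoluteValue ℂ

lemma Complex.abs_apply' (z : ℂ) : Complex.abs z = ‖z‖ := rfl

lemma Complex.abs_I : Complex.abs Complex.I = 1 := by simp [Complex.abs_apply']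

lemma Complex.abs_ofReal (r : ℝ) : Complex.abs (r : ℂ) = |r| := by
  simp [Complex.abs_apply']

namespace DetAux

variable {n : Type*} [Fintype n] [DecidableEq n]

lemma psd_diag {A : Matrix n n ℂ} (hA : A.PosSemidef) (k : n) :
    0 ≤ (A k k).re ∧ (A k k).im = 0 := by
  have h : 0 ≤ A k k := by
    have h0 := (posSemidef_iff_dotProduct_mulVec.mp hA).2 (Pi.single k 1)
    rwa [← Pi.single_star, star_one, mulVec_single, single_dotProduct, one_mul, Pi.smul_apply,
      op_smul_eq_mul, mul_one, col_apply] at h0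
  rcases Complex.nonneg_iff.mp h with ⟨h1, h2⟩
  exact ⟨h1, h2.symm⟩

lemma trace_re_eq {A : Matrix n n ℂ} : A.trace.re = ∑ k, (A k k).re := by
  simp [Matrix.trace, Matrix.diag, Complex.re_sum]

lemma psd_trace_re_nonneg {A : Matrix n n ℂ} (hA : A.PosSemidef) : 0 ≤ A.trace.re := by
  rw [trace_re_eq]
  exact Finset.sum_nonneg fun k _ => (psd_diag hA k).1

lemma psd_diag_le_trace {A : Matrix n n ℂ} (hA : A.PosSemidef) (k : n) :
    (A k k).re ≤ A.trace.re := by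
  rw [trace_re_eq]
  exact Finset.single_le_sum (fun l _ => (psd_diag hA l).1) (Finset.mem_univ k)

lemma psd_pair_le_trace {A : Matrix n n ℂ} (hA : A.PosSemidef) {i j : n} (hij : i ≠ j) :
    (A i i).re + (A j j).re ≤ A.trace.re := by
  have h := Finset.sum_le_sum_of_subset_of_nonneg (Finset.subset_univ ({i, j} : Finset n))
    (fun l _ _ => (psd_diag hA l).1)
  rw [Finset.sum_pair hij] at h
  rw [trace_re_eq]
  exact h

lemma psd_entry_abs_le {A : Matrix n n ℂ} (hA : A.PosSemidef) (i j : n) :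
    Complex.abs (A i j) ≤ 2 * A.trace.re := by
  have htr := psd_trace_re_nonneg hA
  by_cases hij : i = j
  · subst hij
    obtain ⟨h1, h2⟩ := psd_diag hA i
    have hrepr : A i i = ((A i i).re : ℂ) := Complex.ext rfl (by simp [h2])
    rw [hrepr, Complex.abs_ofReal, abs_of_nonneg h1]
    have := psd_diag_le_trace hA i
    linarith
  · by_cases hz : A i j = 0
    · rw [hz]
      simp only [map_zero]
      linarith
    · set z := A i j with hzdef
      set az := Complex.abs z with hazdef
      have haz : 0 < az := AbsoluteValue.pos Complex.abs hz
      have hzz : (starRingEnd ℂ) z * z = (az : ℂ) ^ 2 := by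
        rw [mul_comm, Complex.mul_conj, Complex.normSq_eq_norm_sq]
        push_cast
        rfl
      set x : n → ℂ := Pi.single i z + Pi.single j (-(az : ℂ)) with hxdef
      have hstar : star x = Pi.single i ((starRingEnd ℂ) z) + Pi.single j (-(az : ℂ)) := by
        funext l
        simp only [hxdef, Pi.star_apply, Pi.add_apply, star_add, Pi.single_apply,
          apply_ite (star : ℂ → ℂ), star_zero, star_neg]
        simp [Complex.star_def, Complex.conj_ofReal]
      have hmv : A *ᵥ x = (fun k => A k i * z) + (fun k => A k j * (-(az : ℂ))) := by
        rw [hxdef, Matrix.mulVec_add, Matrix.mulVec_single, Matrix.mulVec_single]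
        rfl
      have hji : A j i = (starRingEnd ℂ) z := by
        calc A j i = Aᴴ j i := by rw [hA.1]
        _ = (starRingEnd ℂ) (A i j) := rfl
      have hform : star x ⬝ᵥ (A *ᵥ x) = ((az : ℂ)) ^ 2 * (A i i + A j j - 2 * (az : ℂ)) := by
        rw [hstar, hmv, add_dotProduct, single_dotProduct, single_dotProduct]
        simp only [Pi.add_apply]
        rw [hji]
        linear_combination (A i i - 2 * (az : ℂ)) * hzz
      have hq := (posSemidef_iff_dotProduct_mulVec.mp hA).2 x
      rw [hform] at hq
      obtain ⟨hqre, _⟩ := Complex.nonneg_iff.mp hq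
      have hre : (((az : ℂ)) ^ 2 * (A i i + A j j - 2 * (az : ℂ))).re
          = az ^ 2 * ((A i i).re + (A j j).re - 2 * az) := by
        have hcast : ((az : ℂ)) ^ 2 = ((az ^ 2 : ℝ) : ℂ) := by push_cast; ring
        rw [hcast, Complex.re_ofReal_mul]
        congr 1
        simp [Complex.sub_re, Complex.add_re]
      rw [hre] at hqre
      have hpos2 : (0 : ℝ) < az ^ 2 := by positivity
      have h2 : 0 ≤ (A i i).re + (A j j).re - 2 * az :=
        (mul_nonneg_iff_of_pos_left hpos2).mp hqre
      have h3 := psd_pair_le_trace hA hij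
      linarith

lemma isHermitian_diff_psd {H : Matrix n n ℂ} (hH : H.IsHermitian) :
    ∃ P Q : Matrix n n ℂ, P.PosSemidef ∧ Q.PosSemidef ∧ H = P - Q := by
  set U : Matrix n n ℂ := (Matrix.IsHermitian.eigenvectorUnitary hH : Matrix n n ℂ) with hU
  refine ⟨U * diagonal (RCLike.ofReal ∘ fun k => max (hH.eigenvalues k) 0) * Uᴴ,
          U * diagonal (RCLike.ofReal ∘ fun k => max (-hH.eigenvalues k) 0) * Uᴴ, ?_, ?_, ?_⟩
  · refine Matrix.PosSemidef.mul_mul_conjTranspose_same ?_ U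
    refine Matrix.posSemidef_diagonal_iff.mpr fun k => ?_
    simp only [Function.comp_apply]
    exact RCLike.ofReal_nonneg.mpr (le_max_right _ _)
  · refine Matrix.PosSemidef.mul_mul_conjTranspose_same ?_ U
    refine Matrix.posSemidef_diagonal_iff.mpr fun k => ?_
    simp only [Function.comp_apply]
    exact RCLike.ofReal_nonneg.mpr (le_max_right _ _)
  · have hmax : ∀ a : ℝ, max a 0 - max (-a) 0 = a := by
      intro a
      rcases le_total a 0 with h | h
      · rw [max_eq_right h, max_eq_left (by linarith : (0:ℝ) ≤ -a)]
        ring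
      · rw [max_eq_left h, max_eq_right (by linarith : -a ≤ (0:ℝ))]
        ring
    have hdiag : diagonal ((RCLike.ofReal ∘ fun k => max (hH.eigenvalues k) 0) : n → ℂ)
        - diagonal ((RCLike.ofReal ∘ fun k => max (-hH.eigenvalues k) 0) : n → ℂ)
        = diagonal ((RCLike.ofReal ∘ hH.eigenvalues) : n → ℂ) := by
      rw [Matrix.diagonal_sub]
      ext k l
      by_cases hkl : k = l
      · subst hkl
        rw [Matrix.diagonal_apply_eq, Matrix.diagonal_apply_eq]
        simp only [Function.comp_apply, Pi.sub_apply]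
        rw [← RCLike.ofReal_sub, hmax]
      · rw [Matrix.diagonal_apply_ne _ hkl, Matrix.diagonal_apply_ne _ hkl]
    have hs := hH.spectral_theorem
    rw [Unitary.conjStarAlgAut_apply, Matrix.star_eq_conjTranspose] at hs
    have hgoal : U * diagonal ((RCLike.ofReal ∘ fun k => max (hH.eigenvalues k) 0) : n → ℂ) * Uᴴ
        - U * diagonal ((RCLike.ofReal ∘ fun k => max (-hH.eigenvalues k) 0) : n → ℂ) * Uᴴ
        = U * diagonal ((RCLike.ofReal ∘ hH.eigenvalues) : n → ℂ) * Uᴴ := by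
      rw [← sub_mul, ← mul_sub, hdiag]
    exact hs.trans hgoal.symm

lemma decomp (A : Matrix n n ℂ) :
    ∃ P₁ P₂ P₃ P₄ : Matrix n n ℂ,
      P₁.PosSemidef ∧ P₂.PosSemidef ∧ P₃.PosSemidef ∧ P₄.PosSemidef ∧
      A = P₁ - P₂ + Complex.I • P₃ - Complex.I • P₄ := by
  have hH : ((2⁻¹ : ℂ) • (A + Aᴴ)).IsHermitian := by
    unfold Matrix.IsHermitian
    rw [Matrix.conjTranspose_smul, Matrix.conjTranspose_add,
      Matrix.conjTranspose_conjTranspose]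
    have : star (2⁻¹ : ℂ) = 2⁻¹ := by
      rw [star_inv₀]
      norm_num
    rw [this, add_comm]
  have hK : ((2⁻¹ : ℂ) • (Complex.I • (Aᴴ - A))).IsHermitian := by
    unfold Matrix.IsHermitian
    rw [Matrix.conjTranspose_smul, Matrix.conjTranspose_smul, Matrix.conjTranspose_sub,
      Matrix.conjTranspose_conjTranspose]
    have h1 : star (2⁻¹ : ℂ) = 2⁻¹ := by
      rw [star_inv₀]; norm_num
    have h2 : star Complex.I = -Complex.I := by
      rw [Complex.star_def, Complex.conj_I]
    rw [h1, h2, neg_smul, ← smul_neg, neg_sub]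
  obtain ⟨P₁, P₂, h₁, h₂, hPQ⟩ := isHermitian_diff_psd hH
  obtain ⟨P₃, P₄, h₃, h₄, hRS⟩ := isHermitian_diff_psd hK
  refine ⟨P₁, P₂, P₃, P₄, h₁, h₂, h₃, h₄, ?_⟩
  have hA : A = (2⁻¹ : ℂ) • (A + Aᴴ) + Complex.I • ((2⁻¹ : ℂ) • (Complex.I • (Aᴴ - A))) := by
    ext i j
    simp only [Matrix.add_apply, Matrix.smul_apply, Matrix.sub_apply, smul_eq_mul]
    linear_combination (2⁻¹ * (A i j - Aᴴ i j)) * Complex.I_mul_I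
  rw [hA, hPQ, hRS, smul_sub]
  abel

end DetAux

open DetAux in
/-- the determinant of a positive trace-preserving linear map on `M_d`
is a real number lying in the interval `[-1, 1]`. -/
theorem det_of_positive_tracePreserving_mem_Icc {d : ℕ}
    (T : Mat d →ₗ[ℂ] Mat d) (hpos : IsPositiveMap T) (htp : IsTracePreserving T) :
    ∃ r : ℝ, LinearMap.det T = (r : ℂ) ∧ -1 ≤ r ∧ r ≤ 1 := by
  classical
  -- powers of `T` preserve positive semidefiniteness and the trace
  have hpow : ∀ (m : ℕ) (B : Mat d), B.PosSemidef →
      ((T ^ m) B).PosSemidef ∧ ((T ^ m) B).trace = B.trace := by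
    intro m
    induction m with
    | zero =>
      intro B hB
      rw [pow_zero]
      exact ⟨hB, rfl⟩
    | succ k ih =>
      intro B hB
      rw [pow_succ]
      rw [Module.End.mul_apply]
      obtain ⟨hk1, hk2⟩ := ih (T B) (hpos B hB)
      exact ⟨hk1, hk2.trans (htp B)⟩
  -- every eigenvalue of `T` has modulus at most 1
  have heig : ∀ (μ : ℂ) (A : Mat d), A ≠ 0 → T A = μ • A → Complex.abs μ ≤ 1 := by
    intro μ A hA0 hTA
    obtain ⟨P₁, P₂, P₃, P₄, h₁, h₂, h₃, h₄, hdec⟩ := decomp A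
    set C : ℝ := 2 * P₁.trace.re + 2 * P₂.trace.re + 2 * P₃.trace.re + 2 * P₄.trace.re with hC
    have hCb : ∀ (m : ℕ) (i j : Fin d), Complex.abs (((T ^ m) A) i j) ≤ C := by
      intro m i j
      have hApow : (T ^ m) A = (T ^ m) P₁ - (T ^ m) P₂
          + Complex.I • ((T ^ m) P₃) - Complex.I • ((T ^ m) P₄) := by
        rw [hdec]
        simp only [map_sub, map_add, _root_.map_smul]
      have e₁ := psd_entry_abs_le (hpow m P₁ h₁).1 i j
      rw [(hpow m P₁ h₁).2] at e₁
      have e₂ := psd_entry_abs_le (hpow m P₂ h₂).1 i j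
      rw [(hpow m P₂ h₂).2] at e₂
      have e₃ := psd_entry_abs_le (hpow m P₃ h₃).1 i j
      rw [(hpow m P₃ h₃).2] at e₃
      have e₄ := psd_entry_abs_le (hpow m P₄ h₄).1 i j
      rw [(hpow m P₄ h₄).2] at e₄
      rw [hApow]
      simp only [Matrix.sub_apply, Matrix.add_apply, Matrix.smul_apply, smul_eq_mul]
      set a := ((T ^ m) P₁) i j
      set b := ((T ^ m) P₂) i j
      set c := ((T ^ m) P₃) i j
      set e := ((T ^ m) P₄) i j
      have habs : Complex.abs (a - b + Complex.I * c - Complex.I * e)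
          ≤ Complex.abs a + Complex.abs b + Complex.abs c + Complex.abs e := by
        have hIc : Complex.abs (Complex.I * c) = Complex.abs c := by
          rw [Complex.abs.map_mul, Complex.abs_I, one_mul]
        have hIe : Complex.abs (-(Complex.I * e)) = Complex.abs e := by
          rw [Complex.abs.map_neg, Complex.abs.map_mul, Complex.abs_I, one_mul]
        calc Complex.abs (a - b + Complex.I * c - Complex.I * e)
            = Complex.abs (a + -b + Complex.I * c + -(Complex.I * e)) := by
              rw [sub_eq_add_neg, sub_eq_add_neg]
          _ ≤ Complex.abs (a + -b + Complex.I * c) + Complex.abs (-(Complex.I * e)) :=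
              Complex.abs.add_le _ _
          _ ≤ (Complex.abs (a + -b) + Complex.abs (Complex.I * c))
              + Complex.abs (-(Complex.I * e)) :=
              add_le_add_left (Complex.abs.add_le _ _) _
          _ ≤ ((Complex.abs a + Complex.abs (-b)) + Complex.abs (Complex.I * c))
              + Complex.abs (-(Complex.I * e)) :=
              add_le_add_left (add_le_add_left (Complex.abs.add_le _ _) _) _
          _ = Complex.abs a + Complex.abs b + Complex.abs c + Complex.abs e := by
              rw [hIc, hIe, Complex.abs.map_neg]
      calc Complex.abs (a - b + Complex.I * c - Complex.I * e)
          ≤ Complex.abs a + Complex.abs b + Complex.abs c + Complex.abs e := habs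
        _ ≤ C := by rw [hC]; linarith
    have hiter : ∀ m : ℕ, (T ^ m) A = (μ ^ m) • A := by
      intro m
      induction m with
      | zero => simp
      | succ k ih =>
        rw [pow_succ, Module.End.mul_apply, hTA, _root_.map_smul, ih, smul_smul, ← pow_succ']
    obtain ⟨i, j, hij⟩ : ∃ i j, A i j ≠ 0 := by
      by_contra hc
      push_neg at hc
      exact hA0 (by ext i j; simpa using hc i j)
    by_contra hgt
    push_neg at hgt
    obtain ⟨m, hm⟩ := pow_unbounded_of_one_lt (C / Complex.abs (A i j)) hgt
    have hb := hCb m i j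
    rw [hiter m] at hb
    rw [Matrix.smul_apply, smul_eq_mul, Complex.abs.map_mul, Complex.abs.map_pow] at hb
    have hpos' : 0 < Complex.abs (A i j) := AbsoluteValue.pos Complex.abs hij
    rw [div_lt_iff₀ hpos'] at hm
    linarith
  -- set up the matrix of `T` in the standard basis
  set b : Module.Basis (Fin d × Fin d) ℂ (Mat d) := Matrix.stdBasis ℂ (Fin d) (Fin d) with hbdef
  set M : Matrix (Fin d × Fin d) (Fin d × Fin d) ℂ := LinearMap.toMatrix b b T with hMdef
  have hdet : LinearMap.det T = M.det := (LinearMap.det_toMatrix b T).symm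
  have hrepr : ∀ (A : Mat d) (ij : Fin d × Fin d), b.repr A ij = A ij.1 ij.2 := by
    intro A ij
    obtain ⟨i, j⟩ := ij
    rw [hbdef]
    simp [Matrix.stdBasis, Module.Basis.map_repr, Module.Basis.repr_reindex]
  -- `T` preserves Hermitian matrices
  have hherm : ∀ A : Mat d, A.IsHermitian → (T A).IsHermitian := by
    intro A hA
    obtain ⟨P, Q, hP, hQ, hd⟩ := isHermitian_diff_psd hA
    rw [hd, map_sub]
    exact ((hpos P hP).1).sub ((hpos Q hQ).1)
  -- `T` commutes with the conjugate transpose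
  have hconj : ∀ A : Mat d, (T Aᴴ)ᴴ = T A := by
    intro A
    obtain ⟨P₁, P₂, P₃, P₄, h₁, h₂, h₃, h₄, hdec⟩ := decomp A
    have hAH : Aᴴ = P₁ - P₂ - Complex.I • P₃ + Complex.I • P₄ := by
      rw [hdec]
      rw [Matrix.conjTranspose_sub, Matrix.conjTranspose_add, Matrix.conjTranspose_sub,
        Matrix.conjTranspose_smul, Matrix.conjTranspose_smul, h₁.1, h₂.1, h₃.1, h₄.1]
      rw [show star Complex.I = -Complex.I from by rw [Complex.star_def, Complex.conj_I]]
      rw [neg_smul, neg_smul]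
      abel
    rw [hAH]
    have hstarI : star Complex.I = -Complex.I := by rw [Complex.star_def, Complex.conj_I]
    simp only [map_sub, map_add, _root_.map_smul, Matrix.conjTranspose_add,
      Matrix.conjTranspose_sub, Matrix.conjTranspose_smul, hstarI,
      (hpos P₁ h₁).1.eq, (hpos P₂ h₂).1.eq, (hpos P₃ h₃).1.eq, (hpos P₄ h₄).1.eq, neg_smul,
      sub_neg_eq_add, ← sub_eq_add_neg]
    rw [hdec]
    simp only [map_sub, map_add, _root_.map_smul]
  -- the matrix of `T` has a conjugation symmetry, so its determinant is real
  have hMentry : ∀ p q r s : Fin d, M (p, q) (r, s) = (T (single r s 1)) p q := by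
    intro p q r s
    rw [hMdef, LinearMap.toMatrix_apply, hbdef, Matrix.stdBasis_eq_single, ← hbdef,
      hrepr]
  have hswap : ∀ p q r s : Fin d, (starRingEnd ℂ) (M (p, q) (r, s)) = M (q, p) (s, r) := by
    intro p q r s
    rw [hMentry, hMentry]
    have h3 : (single s r (1 : ℂ))ᴴ = single r s 1 := by
      ext u v
      simp [Matrix.conjTranspose_apply, Matrix.single, apply_ite (star : ℂ → ℂ),
        and_comm]
    have h1 : (T (single r s 1))ᴴ = T (single s r 1) := by
      have h2 := hconj (single s r 1)
      rw [h3] at h2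
      exact h2
    calc (starRingEnd ℂ) ((T (single r s 1)) p q)
        = ((T (single r s 1))ᴴ) q p := by
          rw [Matrix.conjTranspose_apply, Complex.star_def]
      _ = (T (single s r 1)) q p := by rw [h1]
  have hdetreal : (starRingEnd ℂ) M.det = M.det := by
    have h1 : M.map (starRingEnd ℂ)
        = M.submatrix (Equiv.prodComm (Fin d) (Fin d)) (Equiv.prodComm (Fin d) (Fin d)) := by
      ext ⟨p, q⟩ ⟨r, s⟩
      simp only [Matrix.map_apply, Matrix.submatrix_apply, Equiv.prodComm_apply, Prod.swap]
      exact hswap p q r s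
    calc (starRingEnd ℂ) M.det = (M.map (starRingEnd ℂ)).det := by
          rw [RingHom.map_det, RingHom.mapMatrix_apply]
      _ = M.det := by rw [h1, Matrix.det_submatrix_equiv_self]
  -- every root of the characteristic polynomial of `M` has modulus at most 1
  have hroots : ∀ μ ∈ M.charpoly.roots, Complex.abs μ ≤ 1 := by
    intro μ hμ
    have hroot : M.charpoly.IsRoot μ := Polynomial.isRoot_of_mem_roots hμ
    have hev : (Matrix.diagonal (fun _ : Fin d × Fin d => μ) - M).det = 0 := by
      have hmd := RingHom.map_det (Polynomial.evalRingHom μ) (charmatrix M)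
      rw [RingHom.mapMatrix_apply] at hmd
      have hmap : (charmatrix M).map (Polynomial.evalRingHom μ)
          = Matrix.diagonal (fun _ : Fin d × Fin d => μ) - M := by
        ext pq rs
        by_cases h : pq = rs
        · subst h
          simp [Matrix.charmatrix_apply, Matrix.map_apply, Matrix.diagonal_apply_eq]
        · simp [Matrix.charmatrix_apply, Matrix.map_apply, Matrix.diagonal_apply_ne _ h, h]
      rw [hmap] at hmd
      rw [← hmd]
      simpa [Matrix.charpoly] using hroot
    obtain ⟨v, hv0, hv⟩ := Matrix.exists_mulVec_eq_zero_iff.mpr hev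
    have hMv : M *ᵥ v = μ • v := by
      have h1 : Matrix.diagonal (fun _ : Fin d × Fin d => μ) *ᵥ v - M *ᵥ v = 0 := by
        rw [← Matrix.sub_mulVec]
        exact hv
      have h2 : Matrix.diagonal (fun _ : Fin d × Fin d => μ) *ᵥ v = μ • v := by
        funext k
        simp [Matrix.mulVec_diagonal]
      rw [h2] at h1
      exact (sub_eq_zero.mp h1).symm
    set x : Mat d := b.equivFun.symm v with hxdef
    have hx0 : x ≠ 0 := by
      intro h0
      apply hv0
      have hveq : v = b.equivFun x := (b.equivFun.apply_symm_apply v).symm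
      rw [h0, map_zero] at hveq
      exact hveq
    have hreprx : ⇑(b.repr x) = v := by
      funext k
      rw [← Module.Basis.equivFun_apply, hxdef, LinearEquiv.apply_symm_apply]
    have hTx : T x = μ • x := by
      have hL : ⇑(b.repr (T x)) = M *ᵥ v := by
        rw [hMdef, ← hreprx]
        exact (LinearMap.toMatrix_mulVec_repr b b T x).symm
      have hR : ⇑(b.repr (μ • x)) = μ • v := by
        rw [_root_.map_smul]
        funext k
        simp [hreprx]
      have hco : ⇑(b.repr (T x)) = ⇑(b.repr (μ • x)) := by rw [hL, hR, hMv]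
      exact b.repr.injective (DFunLike.coe_injective hco)
    exact heig μ x hx0 hTx
  -- conclude
  have hprodle : Complex.abs M.det ≤ 1 := by
    rw [Matrix.det_eq_prod_roots_charpoly]
    rw [show Complex.abs M.charpoly.roots.prod
        = (M.charpoly.roots.map Complex.abs).prod from map_multiset_prod Complex.abs _]
    have key : ∀ s : Multiset ℂ, (∀ μ ∈ s, Complex.abs μ ≤ 1) →
        (s.map Complex.abs).prod ≤ 1 ∧ 0 ≤ (s.map Complex.abs).prod := by
      intro s
      induction s using Multiset.induction_on with
      | empty => intro _; simp
      | cons a t ih =>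
        intro h
        have ha := h a (Multiset.mem_cons_self a t)
        have ht := ih fun μ hμ => h μ (Multiset.mem_cons_of_mem hμ)
        rw [Multiset.map_cons, Multiset.prod_cons]
        constructor
        · calc Complex.abs a * (t.map Complex.abs).prod ≤ 1 * 1 :=
            mul_le_mul ha ht.1 ht.2 zero_le_one
          _ = 1 := one_mul 1
        · exact mul_nonneg (AbsoluteValue.nonneg _ _) ht.2
    exact (key M.charpoly.roots hroots).1
  have him : M.det.im = 0 := by
    have := hdetreal
    rwa [Complex.conj_eq_iff_im] at this
  have hre : M.det = ((M.det.re : ℝ) : ℂ) := by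
    apply Complex.ext
    · simp
    · simp [him]
  have habs : Complex.abs M.det = |M.det.re| := by
    conv_lhs => rw [hre]
    exact Complex.abs_ofReal _
  rw [habs] at hprodle
  refine ⟨M.det.re, ?_, ?_, ?_⟩
  · rw [hdet]
    exact hre
  · linarith [(abs_le.mp hprodle).1]
  · linarith [(abs_le.mp hprodle).2]
end
end

section
/- Let d ≥ 2 and define the corner transposition ρ ↦ ρ^{T_c} on M_d by (ρ^{T_c})_{k,l} = ρ_{l,k} for (k,l) ∈ {(0, d−1), (d−1, 0)} and (ρ^{T_c})_{k,l} = ρ_{k,l} otherwise (indices in Fin d). Then the linear map T(ρ) = (ρ^{T_c} + tr(ρ)·𝟙)/(1+d) on M_d is trace-preserving and completely positive, its Choi matrix has rank d² − 1, and det T = −(d+1)^{1−d²}. -/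
open Matrix
open scoped Kronecker ComplexOrder

noncomputable section

/-- The Choi matrix `C(T) = Σ_{i,j} E_{ij} ⊗ T(E_{ij})` of a linear map on `M_d`. -/
def choi {d : ℕ} (T : Mat d →ₗ[ℂ] Mat d) :
    Matrix (Fin d × Fin d) (Fin d × Fin d) ℂ :=
  ∑ i : Fin d, ∑ j : Fin d,
    (Matrix.single i j (1 : ℂ)) ⊗ₖ T (Matrix.single i j (1 : ℂ))

/-- A linear map on `M_d` is completely positive if its Choi matrix is positive
semidefinite. -/
def IsCompletelyPositive {d : ℕ} (T : Mat d →ₗ[ℂ] Mat d) : Prop :=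
  (choi T).PosSemidef

/-- A quantum channel is a completely positive trace-preserving linear map. -/
def IsChannel {d : ℕ} (T : Mat d →ₗ[ℂ] Mat d) : Prop :=
  IsTracePreserving T ∧ IsCompletelyPositive T

/-- The corner transposition on `M_d` (`d = n + 2 ≥ 2`): it transposes the two corner
entries `(0, d-1)` and `(d-1, 0)` and leaves all other entries unchanged. -/
def cornerTranspose {n : ℕ} (ρ : Mat (n + 2)) : Mat (n + 2) :=
  Matrix.of fun k l =>
    if (k = 0 ∧ l = Fin.last (n + 1)) ∨ (k = Fin.last (n + 1) ∧ l = 0) then ρ l k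
    else ρ k l


lemma choi_apply {d : ℕ} (T : Mat d →ₗ[ℂ] Mat d) (p q : Fin d × Fin d) :
    choi T p q = T (Matrix.single p.1 q.1 1) p.2 q.2 := by
  simp only [choi, Matrix.sum_apply, kroneckerMap_apply, Matrix.single]
  simp [of_apply, ite_and, Finset.sum_ite_eq, Finset.sum_ite_eq']

namespace Corner
variable {n : ℕ}

local notation "L" => Fin.last (n+1)

lemma zero_ne_last : (0 : Fin (n+2)) ≠ Fin.last (n+1) := by
  simp [Fin.ext_iff]

lemma trace_cornerTranspose (ρ : Mat (n+2)) : (cornerTranspose ρ).trace = ρ.trace := by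
  unfold Matrix.trace
  refine Finset.sum_congr rfl fun k _ => ?_
  simp [Matrix.diag, cornerTranspose]

def Amat (n : ℕ) : Matrix (Fin (n+2) × Fin (n+2)) (Fin (n+2) × Fin (n+2)) ℂ :=
  fun p q =>
    (if (p.2 = 0 ∧ q.2 = Fin.last (n+1)) ∨ (p.2 = Fin.last (n+1) ∧ q.2 = 0)
      then (if p.1 = q.2 ∧ q.1 = p.2 then 1 else 0)
      else (if p.1 = p.2 ∧ q.1 = q.2 then 1 else 0))
    + (if p.1 = q.1 ∧ p.2 = q.2 then 1 else 0)

lemma trace_sbm (a c : Fin (n+2)) :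
    (Matrix.single a c (1:ℂ)).trace = if a = c then 1 else 0 := by
  simp [Matrix.trace, Matrix.diag, Matrix.single, Finset.sum_ite_eq, ite_and, eq_comm]

lemma choi_eq (T : Mat (n + 2) →ₗ[ℂ] Mat (n + 2))
    (hT : ∀ ρ : Mat (n + 2),
      T ρ = (1 + ((n+2 : ℕ) : ℂ))⁻¹ • (cornerTranspose ρ + ρ.trace • (1 : Mat (n + 2)))) :
    choi T = (1 + ((n+2 : ℕ) : ℂ))⁻¹ • Amat n := by
  ext p q
  rw [choi_apply, hT]
  rcases p with ⟨a, b⟩; rcases q with ⟨c, e⟩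
  simp only [Matrix.smul_apply, Matrix.add_apply, Amat, cornerTranspose, of_apply,
    trace_sbm, Matrix.smul_apply, Matrix.one_apply, smul_eq_mul]
  congr 1
  split_ifs <;> simp_all [Matrix.single, of_apply]

lemma boole_mul_boole (P Q : Prop) [Decidable P] [Decidable Q] :
    (if P then (1:ℂ) else 0) * (if Q then 1 else 0) = if P ∧ Q then 1 else 0 := by
  split_ifs <;> simp_all

set_option maxHeartbeats 1000000 in
lemma Amat_eq (p q : Fin (n+2) × Fin (n+2)) :
    Amat n p q =
      (if p.1 = p.2 then 1 else 0) * (if q.1 = q.2 then 1 else 0)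
      - (if p = (0,0) then 1 else 0) * (if q = (L,L) then 1 else 0)
      - (if p = (L,L) then 1 else 0) * (if q = (0,0) then 1 else 0)
      + (if p = (0,L) then 1 else 0) * (if q = (L,0) then 1 else 0)
      + (if p = (L,0) then 1 else 0) * (if q = (0,L) then 1 else 0)
      + (if p = q then 1 else 0) := by
  have h0L : (0 : Fin (n+2)) ≠ L := zero_ne_last
  rcases p with ⟨a, b⟩; rcases q with ⟨c, e⟩
  simp only [Amat, boole_mul_boole, Prod.mk.injEq, Prod.ext_iff]
  have hL0 : L ≠ (0 : Fin (n+2)) := h0L.symm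
  by_cases h1 : b = 0 ∧ e = L
  · obtain ⟨rfl, rfl⟩ := h1
    simp only [h0L, hL0, eq_self_iff_true, true_and, and_true, and_false, false_and,
      or_false, false_or, if_true, if_false, ite_true, ite_false]
    split_ifs <;> simp_all
  · by_cases h2 : b = L ∧ e = 0
    · obtain ⟨rfl, rfl⟩ := h2
      simp only [h0L, hL0, eq_self_iff_true, true_and, and_true, and_false, false_and,
        or_false, false_or, if_true, if_false, ite_true, ite_false]
      split_ifs <;> simp_all
    · rw [if_neg (by tauto),
          if_neg (show ¬((a = 0 ∧ b = 0) ∧ c = L ∧ e = L) by tauto),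
          if_neg (show ¬((a = L ∧ b = L) ∧ c = 0 ∧ e = 0) by tauto),
          if_neg (show ¬((a = 0 ∧ b = L) ∧ c = L ∧ e = 0) by tauto),
          if_neg (show ¬((a = L ∧ b = 0) ∧ c = 0 ∧ e = L) by tauto)]
      ring

lemma Amat_symm (p q : Fin (n+2) × Fin (n+2)) : Amat n q p = Amat n p q := by
  rw [Amat_eq, Amat_eq, show (if q = p then (1:ℂ) else 0) = if p = q then 1 else 0 from by
    simp [eq_comm]]
  ring

lemma Amat_star (p q : Fin (n+2) × Fin (n+2)) : star (Amat n p q) = Amat n p q := by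
  rw [Amat_eq]
  simp [star_sub, star_add, star_mul', apply_ite (star : ℂ → ℂ)]

lemma Amat_herm : (Amat n).IsHermitian := by
  ext p q
  rw [conjTranspose_apply, Amat_star, Amat_symm]

lemma diag_sum (x : (Fin (n+2) × Fin (n+2)) → ℂ) :
    (∑ q : Fin (n+2) × Fin (n+2), (if q.1 = q.2 then (1:ℂ) else 0) * x q)
      = ∑ e, x (e, e) := by
  rw [Fintype.sum_prod_type]
  simp [ite_mul, Finset.sum_ite_eq, Finset.sum_ite_eq']

lemma Amat_mulVec (x : (Fin (n+2) × Fin (n+2)) → ℂ) (p : Fin (n+2) × Fin (n+2)) :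
    (Amat n).mulVec x p =
      (if p.1 = p.2 then 1 else 0) * (∑ e, x (e, e))
      - (if p = (0,0) then 1 else 0) * x (L, L)
      - (if p = (L,L) then 1 else 0) * x (0, 0)
      + (if p = (0,L) then 1 else 0) * x (L, 0)
      + (if p = (L,0) then 1 else 0) * x (0, L)
      + x p := by
  show (∑ q, Amat n p q * x q) = _
  simp only [Amat_eq, sub_mul, add_mul, Finset.sum_sub_distrib, Finset.sum_add_distrib,
    mul_assoc, ← Finset.mul_sum]
  rw [diag_sum]
  congr 1 <;> [skip; simp [ite_mul, Finset.sum_ite_eq, Finset.sum_ite_eq']]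
  congr 1 <;> [skip; simp [ite_mul, Finset.sum_ite_eq, Finset.sum_ite_eq']]
  congr 1 <;> [skip; simp [ite_mul, Finset.sum_ite_eq, Finset.sum_ite_eq']]
  congr 1 <;> [skip; simp [ite_mul, Finset.sum_ite_eq, Finset.sum_ite_eq']]
  congr 1
  simp [ite_mul, Finset.sum_ite_eq, Finset.sum_ite_eq']

lemma single_sum (r : Fin (n+2) × Fin (n+2)) (f : (Fin (n+2) × Fin (n+2)) → ℂ) (c : ℂ) :
    (∑ p : Fin (n+2) × Fin (n+2), f p * ((if p = r then (1:ℂ) else 0) * c)) = f r * c := by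
  rw [Finset.sum_eq_single r]
  · simp
  · intro b _ hb; simp [hb]
  · simp

lemma Amat_qf (x : (Fin (n+2) × Fin (n+2)) → ℂ) :
    star x ⬝ᵥ (Amat n).mulVec x =
      star (∑ e, x (e,e)) * (∑ e, x (e,e))
      + star (x (0,0) - x (L,L)) * (x (0,0) - x (L,L))
      + star (x (0,L) + x (L,0)) * (x (0,L) + x (L,0))
      + ∑ p : Fin (n+2) × Fin (n+2),
          (if p = (0,0) ∨ p = (L,L) ∨ p = (0,L) ∨ p = (L,0) then 0 else star (x p) * x p) := by
  have h0L : (0 : Fin (n+2)) ≠ L := zero_ne_last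
  have hd : ∀ p : Fin (n+2) × Fin (n+2),
      (if p = (0,0) ∨ p = (L,L) ∨ p = (0,L) ∨ p = (L,0) then (0:ℂ) else star (x p) * x p)
      = star (x p) * x p
        - ((if p = ((0:Fin (n+2)),(0:Fin (n+2))) then (1:ℂ) else 0) * (star (x (0,0)) * x (0,0))
          + (if p = (L,L) then (1:ℂ) else 0) * (star (x (L,L)) * x (L,L))
          + (if p = ((0:Fin (n+2)),L) then (1:ℂ) else 0) * (star (x (0,L)) * x (0,L))
          + (if p = (L,(0:Fin (n+2))) then (1:ℂ) else 0) * (star (x (L,0)) * x (L,0))) := by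
    intro p
    rcases p with ⟨u, v⟩
    split_ifs <;> simp_all [Prod.mk.injEq, h0L, h0L.symm] <;> ring
  have t1 : (∑ p : Fin (n+2) × Fin (n+2),
      star (x p) * ((if p.1 = p.2 then (1:ℂ) else 0) * (∑ e, x (e,e))))
      = star (∑ e, x (e,e)) * (∑ e, x (e,e)) := by
    have : ∀ p : Fin (n+2) × Fin (n+2),
        star (x p) * ((if p.1 = p.2 then (1:ℂ) else 0) * (∑ e, x (e,e)))
        = ((if p.1 = p.2 then (1:ℂ) else 0) * star (x p)) * (∑ e, x (e,e)) := fun p => by ring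
    simp only [this, ← Finset.sum_mul]
    rw [diag_sum (fun p => star (x p))]
    congr 1
    rw [star_sum]
  have t2 := single_sum (n := n) ((0:Fin (n+2)),(0:Fin (n+2))) (fun p => star (x p)) (x (L,L))
  have t3 := single_sum (n := n) (L,L) (fun p => star (x p)) (x (0,0))
  have t4 := single_sum (n := n) ((0:Fin (n+2)),L) (fun p => star (x p)) (x (L,0))
  have t5 := single_sum (n := n) (L,(0:Fin (n+2))) (fun p => star (x p)) (x (0,L))
  unfold dotProduct
  simp only [Amat_mulVec, mul_sub, mul_add, Finset.sum_sub_distrib, Finset.sum_add_distrib,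
    Pi.star_apply, t1, t2, t3, t4, t5, hd]
  have boole_sum : ∀ (r : Fin (n+2) × Fin (n+2)) (c : ℂ),
      (∑ p : Fin (n+2) × Fin (n+2), (if p = r then (1:ℂ) else 0) * c) = c := by
    intro r c
    rw [← Finset.sum_mul]
    simp
  simp only [Finset.sum_sub_distrib, Finset.sum_add_distrib, boole_sum]
  simp only [star_sub, star_add]
  ring

lemma Amat_posSemidef : (Amat n).PosSemidef := by
  refine Matrix.PosSemidef.of_dotProduct_mulVec_nonneg Amat_herm fun x => ?_
  rw [Amat_qf]
  have h1 : ∀ z : ℂ, 0 ≤ star z * z := fun z => star_mul_self_nonneg z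
  refine add_nonneg (add_nonneg (add_nonneg (h1 _) (h1 _)) (h1 _)) ?_
  refine Finset.sum_nonneg fun p _ => ?_
  split_ifs
  · exact le_refl 0
  · exact h1 _

def yvec (n : ℕ) : (Fin (n+2) × Fin (n+2)) → ℂ :=
  fun p => (if p = ((0 : Fin (n+2)), Fin.last (n+1)) then (1:ℂ) else 0)
    - if p = (Fin.last (n+1), (0 : Fin (n+2))) then 1 else 0

lemma yvec_ne_zero : yvec n ≠ 0 := by
  have h0L : (0 : Fin (n+2)) ≠ L := zero_ne_last
  intro h
  have := congrFun h ((0 : Fin (n+2)), L)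
  simp [yvec, Prod.ext_iff, h0L] at this

lemma Amat_ker : LinearMap.ker (Amat n).mulVecLin = ℂ ∙ yvec n := by
  have h0L : (0 : Fin (n+2)) ≠ L := zero_ne_last
  have hL0 : L ≠ (0 : Fin (n+2)) := h0L.symm
  apply le_antisymm
  · intro x hx
    have hx' : (Amat n).mulVec x = 0 := hx
    have E : ∀ p, (if p.1 = p.2 then (1:ℂ) else 0) * (∑ e, x (e, e))
        - (if p = ((0:Fin (n+2)),(0:Fin (n+2))) then 1 else 0) * x (L, L)
        - (if p = (L,L) then 1 else 0) * x (0, 0)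
        + (if p = ((0:Fin (n+2)),L) then 1 else 0) * x (L, 0)
        + (if p = (L,(0:Fin (n+2))) then 1 else 0) * x (0, L)
        + x p = 0 := by
      intro p
      rw [← Amat_mulVec, hx']
      rfl
    set s : ℂ := ∑ e, x (e, e) with hs
    have E1 : s - x (L,L) + x (0,0) = 0 := by
      have := E ((0:Fin (n+2)), (0:Fin (n+2)))
      simp [Prod.ext_iff, h0L, hL0] at this
      linear_combination this
    have E2 : s - x (0,0) + x (L,L) = 0 := by
      have := E (L, L)
      simp [Prod.ext_iff, h0L, hL0] at this
      linear_combination this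
    have hs0 : s = 0 := by linear_combination (E1 + E2) / 2
    have hPQ : x ((0:Fin (n+2)),(0:Fin (n+2))) = x (L,L) := by linear_combination E1 - hs0
    have hmid : ∀ e : Fin (n+2), e ≠ 0 → e ≠ L → x (e, e) = 0 := by
      intro e he0 heL
      have := E (e, e)
      simp [Prod.ext_iff, he0, heL, h0L, hL0] at this
      linear_combination this - hs0
    have hsum : s = x ((0:Fin (n+2)),(0:Fin (n+2))) + x (L,L) := by
      rw [hs]
      rw [show (∑ e, x (e, e)) = ∑ e : Fin (n+2),
          ((if e = 0 then x ((0:Fin (n+2)),(0:Fin (n+2))) else 0)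
            + (if e = L then x (L,L) else 0)) from Finset.sum_congr rfl fun e _ => by
        by_cases he0 : e = 0
        · subst he0; simp [h0L]
        · by_cases heL : e = L
          · subst heL; simp [hL0]
          · simp [he0, heL, hmid e he0 heL]]
      simp [Finset.sum_add_distrib]
    have hP0 : x ((0:Fin (n+2)),(0:Fin (n+2))) = 0 := by
      linear_combination (hs0 - hsum + hPQ) / 2
    have hQ0 : x (L,L) = 0 := by linear_combination hP0 - hPQ
    have E3 : x (L,(0:Fin (n+2))) + x ((0:Fin (n+2)),L) = 0 := by
      have := E ((0:Fin (n+2)), L)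
      simp [Prod.ext_iff, h0L, hL0] at this
      linear_combination this
    rw [Submodule.mem_span_singleton]
    refine ⟨x ((0:Fin (n+2)), L), ?_⟩
    funext p
    rcases p with ⟨a, b⟩
    simp only [Pi.smul_apply, yvec, smul_eq_mul]
    by_cases h1 : ((a, b) : Fin (n+2) × Fin (n+2)) = ((0:Fin (n+2)), L)
    · rw [h1]
      simp [Prod.ext_iff, h0L, hL0]
    · by_cases h2 : ((a, b) : Fin (n+2) × Fin (n+2)) = (L, (0:Fin (n+2)))
      · rw [h2]
        simp [Prod.ext_iff, h0L, hL0]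
        linear_combination -E3
      · rw [if_neg h1, if_neg h2]
        have hz : x (a, b) = 0 := by
          by_cases hab : a = b
          · subst hab
            by_cases ha0 : a = 0
            · subst ha0; exact hP0
            · by_cases haL : a = L
              · subst haL; exact hQ0
              · exact hmid a ha0 haL
          · have hE := E (a, b)
            have c1 : ¬((a, b) : Fin (n+2) × Fin (n+2)) = ((0:Fin (n+2)),(0:Fin (n+2))) := by
              simp only [Prod.mk.injEq]
              rintro ⟨rfl, rfl⟩
              exact hab rfl
            have c2 : ¬((a, b) : Fin (n+2) × Fin (n+2)) = (L, L) := by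
              simp only [Prod.mk.injEq]
              rintro ⟨rfl, rfl⟩
              exact hab rfl
            rw [if_neg hab, if_neg c1, if_neg c2, if_neg h1, if_neg h2] at hE
            linear_combination hE
        rw [hz]
        ring
  · rw [Submodule.span_singleton_le_iff_mem]
    refine LinearMap.mem_ker.2 ?_
    show (Amat n).mulVec (yvec n) = 0
    funext p
    have hdiag : (∑ e, yvec n (e, e)) = 0 := by
      apply Finset.sum_eq_zero
      intro e _
      simp only [yvec, Prod.mk.injEq]
      rw [if_neg (by rintro ⟨rfl, h⟩; exact h0L h), if_neg (by rintro ⟨rfl, h⟩; exact h0L h.symm)]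
      ring
    have v1 : yvec n (L,L) = 0 := by simp [yvec, Prod.ext_iff, h0L, hL0]
    have v2 : yvec n ((0:Fin (n+2)),(0:Fin (n+2))) = 0 := by simp [yvec, Prod.ext_iff, h0L, hL0]
    have v3 : yvec n (L,(0:Fin (n+2))) = -1 := by simp [yvec, Prod.ext_iff, h0L, hL0]
    have v4 : yvec n ((0:Fin (n+2)),L) = 1 := by simp [yvec, Prod.ext_iff, h0L, hL0]
    rw [Amat_mulVec, hdiag, v1, v2, v3, v4]
    simp only [Pi.zero_apply, yvec]
    ring

lemma choi_ker (T : Mat (n + 2) →ₗ[ℂ] Mat (n + 2))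
    (hT : choi T = (1 + ((n+2 : ℕ) : ℂ))⁻¹ • Amat n) :
    LinearMap.ker (choi T).mulVecLin = LinearMap.ker (Amat n).mulVecLin := by
  have hc : (1 + ((n+2 : ℕ) : ℂ))⁻¹ ≠ 0 := by
    apply inv_ne_zero
    intro h
    have : (1 + ((n+2 : ℕ) : ℝ)) = 0 := by
      have := congrArg Complex.re h
      simpa using this
    nlinarith [Nat.cast_nonneg (α := ℝ) (n+2)]
  have h1 : (choi T).mulVecLin = (1 + ((n+2 : ℕ) : ℂ))⁻¹ • (Amat n).mulVecLin := by
    rw [hT]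
    apply LinearMap.ext
    intro v
    funext p
    simp [Matrix.mulVecLin_apply, smul_mulVec]
  rw [h1, LinearMap.ker_smul _ _ hc]

lemma choi_rank (T : Mat (n + 2) →ₗ[ℂ] Mat (n + 2))
    (hT : choi T = (1 + ((n+2 : ℕ) : ℂ))⁻¹ • Amat n) :
    (choi T).rank = (n+2)^2 - 1 := by
  have hker : Module.finrank ℂ (LinearMap.ker (choi T).mulVecLin) = 1 := by
    rw [choi_ker T hT, Amat_ker]
    exact finrank_span_singleton yvec_ne_zero
  have h2 := LinearMap.finrank_range_add_finrank_ker (choi T).mulVecLin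
  rw [hker] at h2
  have h3 : Module.finrank ℂ ((Fin (n+2) × Fin (n+2)) → ℂ) = (n+2) * (n+2) := by
    rw [Module.finrank_pi]
    simp
  rw [h3] at h2
  have : (choi T).rank = Module.finrank ℂ (LinearMap.range (choi T).mulVecLin) := rfl
  rw [this]
  have h4 : (n+2)^2 = (n+2) * (n+2) := sq (n+2) ▸ by ring
  omega

def Theta (n : ℕ) : Mat (n+2) →ₗ[ℂ] Mat (n+2) where
  toFun := cornerTranspose
  map_add' := by
    intro ρ σ
    ext k l
    simp only [cornerTranspose, of_apply, Matrix.add_apply]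
    split <;> simp
  map_smul' := by
    intro c ρ
    ext k l
    simp only [cornerTranspose, of_apply, Matrix.smul_apply, RingHom.id_apply]
    split <;> simp

def Phi (n : ℕ) : Mat (n+2) →ₗ[ℂ] Mat (n+2) where
  toFun ρ := ρ.trace • 1
  map_add' := by intro ρ σ; simp [Matrix.trace_add, add_smul]
  map_smul' := by intro c ρ; simp [Matrix.trace_smul, smul_smul]

lemma cornerTranspose_one : cornerTranspose (1 : Mat (n+2)) = 1 := by
  have h0L : (0 : Fin (n+2)) ≠ L := zero_ne_last
  ext k l
  simp only [cornerTranspose, of_apply]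
  split_ifs with h
  · rcases h with ⟨rfl, rfl⟩ | ⟨rfl, rfl⟩ <;>
      simp [Matrix.one_apply, h0L, h0L.symm]
  · rfl

lemma theta_comp : Theta n ∘ₗ (LinearMap.id + Phi n) = Theta n + Phi n := by
  apply LinearMap.ext
  intro ρ
  simp only [LinearMap.comp_apply, LinearMap.add_apply, LinearMap.id_apply]
  rw [map_add]
  congr 1
  show (Theta n) (ρ.trace • 1) = ρ.trace • (1 : Mat (n+2))
  rw [map_smul (Theta n) ρ.trace 1]
  show ρ.trace • cornerTranspose (1 : Mat (n+2)) = _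
  rw [cornerTranspose_one]

lemma ct_sbm (r : Fin (n+2) × Fin (n+2)) :
    cornerTranspose (Matrix.single r.1 r.2 (1:ℂ)) =
      Matrix.single ((Equiv.swap ((0:Fin (n+2)), L) (L, (0:Fin (n+2)))) r).1
        ((Equiv.swap ((0:Fin (n+2)), L) (L, (0:Fin (n+2)))) r).2 1 := by
  have h0L : (0 : Fin (n+2)) ≠ L := zero_ne_last
  by_cases h1 : r = ((0:Fin (n+2)), L)
  · subst h1
    rw [Equiv.swap_apply_left]
    ext k l
    simp only [cornerTranspose, Matrix.single, of_apply]
    by_cases hk1 : k = 0 ∧ l = L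
    · obtain ⟨rfl, rfl⟩ := hk1
      rw [if_pos (Or.inl ⟨rfl, rfl⟩), if_neg (by tauto), if_neg (by tauto)]
    · by_cases hk2 : k = L ∧ l = 0
      · obtain ⟨rfl, rfl⟩ := hk2
        rw [if_pos (Or.inr ⟨rfl, rfl⟩), if_pos ⟨rfl, rfl⟩, if_pos ⟨rfl, rfl⟩]
      · rw [if_neg (by tauto),
            if_neg (fun h => hk1 ⟨h.1.symm, h.2.symm⟩),
            if_neg (fun h => hk2 ⟨h.1.symm, h.2.symm⟩)]
  · by_cases h2 : r = (L, (0:Fin (n+2)))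
    · subst h2
      rw [Equiv.swap_apply_right]
      ext k l
      simp only [cornerTranspose, Matrix.single, of_apply]
      by_cases hk1 : k = 0 ∧ l = L
      · obtain ⟨rfl, rfl⟩ := hk1
        rw [if_pos (Or.inl ⟨rfl, rfl⟩), if_pos ⟨rfl, rfl⟩, if_pos ⟨rfl, rfl⟩]
      · by_cases hk2 : k = L ∧ l = 0
        · obtain ⟨rfl, rfl⟩ := hk2
          rw [if_pos (Or.inr ⟨rfl, rfl⟩), if_neg (by tauto), if_neg (by tauto)]
        · rw [if_neg (by tauto),
              if_neg (fun h => hk2 ⟨h.1.symm, h.2.symm⟩),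
              if_neg (fun h => hk1 ⟨h.1.symm, h.2.symm⟩)]
    · rw [Equiv.swap_apply_of_ne_of_ne h1 h2]
      rcases r with ⟨i, j⟩
      ext k l
      simp only [cornerTranspose, Matrix.single, of_apply]
      by_cases hk1 : k = 0 ∧ l = L
      · obtain ⟨rfl, rfl⟩ := hk1
        rw [if_pos (Or.inl ⟨rfl, rfl⟩),
            if_neg (fun h => h2 (by rw [h.1, h.2])),
            if_neg (fun h => h1 (by rw [h.1, h.2]))]
      · by_cases hk2 : k = L ∧ l = 0
        · obtain ⟨rfl, rfl⟩ := hk2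
          rw [if_pos (Or.inr ⟨rfl, rfl⟩),
              if_neg (fun h => h1 (by rw [h.1, h.2])),
              if_neg (fun h => h2 (by rw [h.1, h.2]))]
        · rw [if_neg (by tauto)]

lemma det_theta : LinearMap.det (Theta n) = -1 := by
  have h0L : (0 : Fin (n+2)) ≠ L := zero_ne_last
  set σ : Equiv.Perm (Fin (n+2) × Fin (n+2)) :=
    Equiv.swap ((0:Fin (n+2)), L) (L, (0:Fin (n+2))) with hσ
  set b := Matrix.stdBasis ℂ (Fin (n+2)) (Fin (n+2)) with hb
  have hbr : ∀ r : Fin (n+2) × Fin (n+2), b r = Matrix.single r.1 r.2 (1:ℂ) := by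
    rintro ⟨i, j⟩
    exact Matrix.stdBasis_eq_single ℂ i j
  have hθ : ∀ r, (Theta n) (b r) = b (σ r) := by
    intro r
    show cornerTranspose (b r) = b (σ r)
    rw [hbr, hbr, ct_sbm]
  rw [← LinearMap.det_toMatrix b]
  have hm : LinearMap.toMatrix b b (Theta n) = σ.permMatrix ℂ := by
    ext p q
    rw [LinearMap.toMatrix_apply, hθ, Module.Basis.repr_self, Finsupp.single_apply]
    simp only [Equiv.Perm.permMatrix, PEquiv.toMatrix_apply, Equiv.toPEquiv_apply,
      Option.mem_def, Option.some.injEq]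
    rcases eq_or_ne (σ q) p with h | h
    · have h' : q = σ p := by rw [← h, hσ]; exact (Equiv.swap_apply_self _ _ _).symm
      rw [if_pos h, if_pos h'.symm]
    · have h' : ¬ q = σ p := fun hc => h (by rw [hc, hσ]; exact Equiv.swap_apply_self _ _ _)
      rw [if_neg h, if_neg (fun hc => h' hc.symm)]
  rw [hm, Matrix.det_permutation, Equiv.Perm.sign_swap (by simp [Prod.ext_iff, h0L])]
  simp

lemma one_eq_sum_sbm : (1 : Mat (n+2)) = ∑ k : Fin (n+2), Matrix.single k k (1:ℂ) := by
  ext i j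
  simp [Matrix.one_apply, Matrix.single, Matrix.sum_apply, ite_and, Finset.sum_ite_eq, eq_comm]

lemma det_one_add_phi : LinearMap.det (LinearMap.id + Phi n) = 1 + ((n+2 : ℕ) : ℂ) := by
  set b := Matrix.stdBasis ℂ (Fin (n+2)) (Fin (n+2)) with hb
  have hbr : ∀ r : Fin (n+2) × Fin (n+2), b r = Matrix.single r.1 r.2 (1:ℂ) := by
    rintro ⟨i, j⟩
    exact Matrix.stdBasis_eq_single ℂ i j
  set u : (Fin (n+2) × Fin (n+2)) → ℂ := fun p => if p.1 = p.2 then 1 else 0 with hu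
  have hrepr1 : ∀ p, b.repr (1 : Mat (n+2)) p = u p := by
    intro p
    rw [one_eq_sum_sbm]
    rw [show (∑ k : Fin (n+2), Matrix.single k k (1:ℂ)) = ∑ k : Fin (n+2), b (k, k) from
      Finset.sum_congr rfl fun k _ => (hbr (k, k)).symm]
    rw [map_sum]
    rw [Finsupp.finset_sum_apply]
    simp only [Module.Basis.repr_self, Finsupp.single_apply]
    rcases p with ⟨p1, p2⟩
    simp only [hu, Prod.mk.injEq]
    by_cases hp : p1 = p2
    · subst hp
      simp
    · rw [if_neg hp]
      apply Finset.sum_eq_zero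
      intro k _
      rw [if_neg]
      rintro ⟨rfl, rfl⟩
      exact hp rfl
  have hm : LinearMap.toMatrix b b (LinearMap.id + Phi n)
      = 1 + Matrix.replicateCol Unit u * Matrix.replicateRow Unit u := by
    ext p q
    rw [map_add, Matrix.add_apply, LinearMap.toMatrix_id]
    congr 1
    rw [LinearMap.toMatrix_apply]
    show b.repr ((trace (b q)) • (1 : Mat (n+2))) p = _
    rw [_root_.map_smul, Finsupp.smul_apply, hrepr1]
    have htr : trace (b q) = u q := by
      rw [hbr]
      rcases q with ⟨q1, q2⟩
      exact trace_sbm q1 q2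
    rw [htr]
    simp [Matrix.mul_apply, Matrix.replicateCol_apply, Matrix.replicateRow_apply, smul_eq_mul, mul_comm]
  rw [← LinearMap.det_toMatrix b, hm, Matrix.det_one_add_replicateCol_mul_replicateRow]
  congr 1
  have : ∀ q : Fin (n+2) × Fin (n+2), u q * u q = u q := by
    intro q
    simp only [hu]
    split_ifs <;> ring
  show (∑ q, u q * u q) = _
  simp only [this]
  rw [show (∑ q, u q) = ∑ q : Fin (n+2) × Fin (n+2), u q * (fun _ => (1:ℂ)) q from by simp]
  rw [diag_sum (n := n) (fun _ => (1:ℂ))]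
  simp

lemma cast_ne (n : ℕ) : (1 + ((n+2:ℕ):ℂ)) ≠ 0 := by
  rw [show (1:ℂ) + ((n+2:ℕ):ℂ) = ((n+3:ℕ):ℂ) by push_cast; ring]
  exact Nat.cast_ne_zero.2 (by omega)

end Corner

theorem cornerTranspose_channel_properties' {n : ℕ} (d : ℕ) (hd : d = n + 2)
    (T : Mat (n + 2) →ₗ[ℂ] Mat (n + 2))
    (hT : ∀ ρ : Mat (n + 2),
      T ρ = (1 + (d : ℂ))⁻¹ • (cornerTranspose ρ + ρ.trace • (1 : Mat (n + 2)))) :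
    (∀ A : Mat (n+2), (T A).trace = A.trace) ∧ (choi T).PosSemidef ∧
      (choi T).rank = d ^ 2 - 1 ∧
      LinearMap.det T = -((d : ℂ) + 1) ^ ((1 : ℤ) - (d : ℤ) ^ 2) := by
  subst hd
  have hne : (1 + ((n+2:ℕ):ℂ)) ≠ 0 := Corner.cast_ne n
  have hchoi : choi T = (1 + ((n+2:ℕ):ℂ))⁻¹ • Corner.Amat n := Corner.choi_eq T hT
  refine ⟨?_, ?_, ?_, ?_⟩
  · intro ρ
    rw [hT, Matrix.trace_smul, Matrix.trace_add, Corner.trace_cornerTranspose,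
      Matrix.trace_smul, Matrix.trace_one]
    simp only [smul_eq_mul]
    field_simp
    simp only [Fintype.card_fin]
    ring
  · rw [hchoi]
    have hc0 : (0:ℂ) ≤ (1 + ((n+2:ℕ):ℂ))⁻¹ := by
      rw [show (1:ℂ) + ((n+2:ℕ):ℂ) = (((n+3:ℕ):ℝ) : ℂ) by push_cast; ring,
        ← Complex.ofReal_inv]
      rw [Complex.zero_le_real]
      positivity
    refine Matrix.PosSemidef.of_dotProduct_mulVec_nonneg ?_ ?_
    · show _ᴴ = _
      rw [Matrix.conjTranspose_smul, Corner.Amat_herm.eq]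
      congr 1
      simp
    · intro x
      rw [Matrix.smul_mulVec, dotProduct_smul, smul_eq_mul]
      exact mul_nonneg hc0 ((Corner.Amat_posSemidef (n := n)).dotProduct_mulVec_nonneg x)
  · exact Corner.choi_rank T hchoi
  · have hTeq : T = (1 + ((n+2:ℕ):ℂ))⁻¹ • (Corner.Theta n + Corner.Phi n) := by
      apply LinearMap.ext
      intro ρ
      rw [hT]
      rfl
    rw [hTeq, LinearMap.det_smul]
    have hdet : LinearMap.det (Corner.Theta n + Corner.Phi n) = -(1 + ((n+2:ℕ):ℂ)) := by
      rw [← Corner.theta_comp, LinearMap.det_comp, Corner.det_theta, Corner.det_one_add_phi]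
      ring
    rw [hdet]
    rw [show Module.finrank ℂ (Mat (n+2)) = (n+2) * (n+2) from by
      rw [Module.finrank_matrix]; simp]
    have key : ∀ m : ℕ, (1 + ((n+2:ℕ):ℂ))⁻¹ ^ m * (-(1 + ((n+2:ℕ):ℂ)))
        = -(((n+2:ℕ):ℂ) + 1) ^ ((1:ℤ) - (m:ℤ)) := by
      intro m
      have hz : ((n+2:ℕ):ℂ) + 1 ≠ 0 := by rw [add_comm]; exact hne
      have h2 : (((n+2:ℕ):ℂ) + 1) ^ ((1:ℤ) - (m:ℤ))
          = (((n+2:ℕ):ℂ) + 1) * ((((n+2:ℕ):ℂ) + 1) ^ m)⁻¹ := by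
        rw [zpow_sub₀ hz, zpow_one, zpow_natCast, div_eq_mul_inv]
      rw [h2, add_comm (1:ℂ), inv_pow]
      ring
    rw [show ((1:ℤ) - (((n+2:ℕ)):ℤ)^2) = (1:ℤ) - ((((n+2)*(n+2) : ℕ)) : ℤ) from by
      push_cast; ring]
    exact key _

/-- for `d = n + 2 ≥ 2`, the map `T(ρ) = (ρ^{T_c} + tr(ρ)·𝟙)/(1+d)` is
trace-preserving and completely positive, its Choi matrix has rank `d² - 1`, and
`det T = -(d+1)^(1-d²)`. -/
theorem cornerTranspose_channel_properties {n : ℕ} (d : ℕ) (hd : d = n + 2)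
    (T : Mat (n + 2) →ₗ[ℂ] Mat (n + 2))
    (hT : ∀ ρ : Mat (n + 2),
      T ρ = (1 + (d : ℂ))⁻¹ • (cornerTranspose ρ + ρ.trace • (1 : Mat (n + 2)))) :
    IsTracePreserving T ∧ IsCompletelyPositive T ∧
      (choi T).rank = d ^ 2 - 1 ∧
      LinearMap.det T = -((d : ℂ) + 1) ^ ((1 : ℤ) - (d : ℤ) ^ 2) := by
  obtain ⟨h1, h2, h3, h4⟩ := cornerTranspose_channel_properties' d hd T hT
  exact ⟨h1, h2, h3, h4⟩
end
end

section
/- Let m ≥ 1, let F : Fin m → M_d be matrices with tr(F_α) = 0 for all α and tr(F_α† F_β) = δ_{αβ}, let H ∈ M_d be Hermitian, and let G be an m×m positive semidefinite complex matrix. Define the linear map L : M_d → M_d by L(ρ) = i(ρH − Hρ) + Σ_{α,β} G_{αβ} ( F_α ρ F_β† − ½ (F_β† F_α ρ + ρ F_β† F_α) ). Then det(exp L) = exp(−d · tr G), where exp L is the exponential of L in the Banach algebra of linear maps on M_d and det is the determinant of a linear endomorphism of the d²-dimensional complex vector space M_d. -/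
open Matrix
open scoped Kronecker ComplexOrder

noncomputable section

/- Equip `M_d` with the Frobenius (Hilbert-Schmidt) norm, making the continuous linear
endomorphisms of `M_d` a Banach algebra with the induced operator norm. -/
attribute [local instance] Matrix.frobeniusNormedAddCommGroup Matrix.frobeniusNormedSpace

instance matFrobTopologicalSpace (d : ℕ) : TopologicalSpace (Mat d) :=
  (Matrix.frobeniusNormedAddCommGroup (α := ℂ)).toUniformSpace.toTopologicalSpace


section AuxDetExp
open Asymptotics Polynomial
variable {N : Type*} [Fintype N] [DecidableEq N]

variable {N : Type*} [Fintype N] [DecidableEq N]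

lemma entry_nnnorm_le_frobenius (A : Matrix N N ℂ) (i j : N) : ‖A i j‖₊ ≤ ‖A‖₊ := by
  rw [Matrix.frobenius_nnnorm_def]
  have h1 : (‖A i j‖₊ ^ (2:ℝ)) ^ (1/2 : ℝ) = ‖A i j‖₊ := by
    rw [← NNReal.rpow_mul]; norm_num
  rw [← h1]
  apply NNReal.rpow_le_rpow _ (by norm_num)
  calc ‖A i j‖₊ ^ (2:ℝ) ≤ ∑ j', ‖A i j'‖₊ ^ (2:ℝ) :=
        Finset.single_le_sum (f := fun j' => ‖A i j'‖₊ ^ (2:ℝ))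
          (fun _ _ => zero_le) (Finset.mem_univ j)
    _ ≤ ∑ i', ∑ j', ‖A i' j'‖₊ ^ (2:ℝ) :=
        Finset.single_le_sum (f := fun i' => ∑ j', ‖A i' j'‖₊ ^ (2:ℝ))
          (fun _ _ => zero_le) (Finset.mem_univ i)

lemma pi_norm_le_frobenius (A : Matrix N N ℂ) : ‖(fun i => A i : ∀ _ : N, N → ℂ)‖ ≤ ‖A‖ := by
  refine (pi_norm_le_iff_of_nonneg (norm_nonneg A)).mpr fun i => ?_
  refine (pi_norm_le_iff_of_nonneg (norm_nonneg A)).mpr fun j => ?_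
  exact_mod_cast entry_nnnorm_le_frobenius A i j

/-- `det` as a continuous multilinear map in the rows. -/
def detCM (N : Type*) [Fintype N] [DecidableEq N] :
    ContinuousMultilinearMap ℂ (fun _ : N => (N → ℂ)) ℂ :=
  MultilinearMap.mkContinuous
    (Matrix.detRowAlternating : (N → ℂ) [⋀^N]→ₗ[ℂ] ℂ).toMultilinearMap
    (Nat.factorial (Fintype.card N)) (by
      intro v
      have hdet : (Matrix.detRowAlternating : (N → ℂ) [⋀^N]→ₗ[ℂ] ℂ) v
          = Matrix.det (Matrix.of v) := rfl
      show ‖(Matrix.detRowAlternating : (N → ℂ) [⋀^N]→ₗ[ℂ] ℂ) v‖ ≤ _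
      rw [hdet, Matrix.det_apply]
      refine (norm_sum_le _ _).trans ?_
      have hterm : ∀ σ : Equiv.Perm N,
          ‖Equiv.Perm.sign σ • ∏ i, Matrix.of v (σ i) i‖ ≤ ∏ i, ‖v i‖ := by
        intro σ
        have h2 : ‖Equiv.Perm.sign σ • ∏ i, Matrix.of v (σ i) i‖
            = ‖∏ i, v (σ i) i‖ := by
          rcases Int.units_eq_one_or (Equiv.Perm.sign σ) with h | h <;> simp [h]
        rw [h2]
        rw [norm_prod]
        calc ∏ i, ‖v (σ i) i‖ ≤ ∏ i, ‖v (σ i)‖ :=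
              Finset.prod_le_prod (fun _ _ => norm_nonneg _)
                (fun i _ => norm_le_pi_norm (v (σ i)) i)
          _ = ∏ i, ‖v i‖ := Equiv.prod_comp σ fun i => ‖v i‖
      refine (Finset.sum_le_sum fun σ _ => hterm σ).trans ?_
      rw [Finset.sum_const, Finset.card_univ, Fintype.card_perm, nsmul_eq_mul]
      )

lemma detCM_apply (A : Matrix N N ℂ) : detCM N (fun i => A i) = A.det := rfl

lemma det_lipschitz (R : ℝ) (hR : 0 ≤ R) (X Y : Matrix N N ℂ) (hX : ‖X‖ ≤ R) (hY : ‖Y‖ ≤ R) :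
    ‖X.det - Y.det‖ ≤ (‖detCM N‖ * Fintype.card N * R ^ (Fintype.card N - 1)) * ‖X - Y‖ := by
  have h := (detCM N).norm_image_sub_le (fun i => X i) (fun i => Y i)
  rw [detCM_apply, detCM_apply] at h
  have hXY : ‖((fun i => X i) - fun i => Y i : ∀ _ : N, N → ℂ)‖ ≤ ‖X - Y‖ := by
    exact pi_norm_le_frobenius (X - Y)
  have hmax : max ‖(fun i => X i : ∀ _ : N, N → ℂ)‖ ‖(fun i => Y i : ∀ _ : N, N → ℂ)‖ ≤ R :=
    max_le ((pi_norm_le_frobenius X).trans hX) ((pi_norm_le_frobenius Y).trans hY)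
  have hf : (0:ℝ) ≤ ‖detCM N‖ * Fintype.card N := by positivity
  have h4 : max ‖(fun i => X i : ∀ _ : N, N → ℂ)‖ ‖(fun i => Y i : ∀ _ : N, N → ℂ)‖
      ^ (Fintype.card N - 1) ≤ R ^ (Fintype.card N - 1) :=
    pow_le_pow_left₀ (le_max_of_le_left (norm_nonneg _)) hmax _
  calc ‖X.det - Y.det‖ ≤ _ := h
    _ ≤ ‖detCM N‖ * Fintype.card N * R ^ (Fintype.card N - 1) * ‖X - Y‖ :=
        mul_le_mul (mul_le_mul_of_nonneg_left h4 hf) hXY (norm_nonneg _) (by positivity)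

lemma hasDerivAt_det_one_add_smul (M : Matrix N N ℂ) :
    HasDerivAt (fun h : ℂ => (1 + h • M).det) M.trace 0 := by
  set p : ℂ[X] := (Matrix.det (1 + (X : ℂ[X]) • M.map C)).divX.divX with hp
  have key : ∀ h : ℂ, (1 + h • M).det = 1 + M.trace * h + p.eval h * h ^ 2 := fun h =>
    Matrix.det_one_add_smul h M
  have h1 : HasDerivAt (fun h : ℂ => M.trace * h) M.trace 0 := by
    simpa using (hasDerivAt_id (0:ℂ)).const_mul M.trace
  have h2 : HasDerivAt (fun h : ℂ => p.eval h * h ^ 2) 0 0 := by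
    simpa using (p.hasDerivAt (0:ℂ)).fun_mul (hasDerivAt_pow 2 (0:ℂ))
  have h3 : HasDerivAt (fun h : ℂ => 1 + M.trace * h + p.eval h * h ^ 2) M.trace 0 := by
    simpa using ((hasDerivAt_const (0:ℂ) (1:ℂ)).fun_add h1).fun_add h2
  exact h3.congr_of_eventuallyEq (Filter.Eventually.of_forall fun h => (key h))

set_option maxHeartbeats 2000000 in
theorem det_exp_clm {E : Type*} [NormedAddCommGroup E] [NormedSpace ℂ E]
    [FiniteDimensional ℂ E] (L : E →L[ℂ] E) :
    LinearMap.det ((NormedSpace.exp L : E →L[ℂ] E) : E →ₗ[ℂ] E)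
      = Complex.exp (LinearMap.trace ℂ E (L : E →ₗ[ℂ] E)) := by
  haveI : CompleteSpace E := FiniteDimensional.complete ℂ E
  letI : NormedAlgebra ℚ (E →L[ℂ] E) := NormedAlgebra.restrictScalars ℚ ℂ (E →L[ℂ] E)
  classical
  set ι := Fin (Module.finrank ℂ E)
  set b : Module.Basis ι ℂ E := Module.finBasis ℂ E with hb
  set ψ : (E →L[ℂ] E) →L[ℂ] Matrix ι ι ℂ :=
    LinearMap.toContinuousLinearMap
      ((LinearMap.toMatrix b b).toLinearMap ∘ₗ ContinuousLinearMap.coeLM ℂ) with hψ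
  have hψ_apply : ∀ g : E →L[ℂ] E, ψ g = LinearMap.toMatrix b b (g : E →ₗ[ℂ] E) := fun g => rfl
  have hψ_one : ψ 1 = 1 := by
    rw [hψ_apply]
    simp [ContinuousLinearMap.one_def, LinearMap.toMatrix_id]
  have hdet : ∀ g : E →L[ℂ] E, LinearMap.det (g : E →ₗ[ℂ] E) = (ψ g).det := by
    intro g
    rw [hψ_apply, LinearMap.det_toMatrix]
  set τ : ℂ := (ψ L).trace with hτ
  have hτ' : τ = LinearMap.trace ℂ E (L : E →ₗ[ℂ] E) := by
    rw [hτ, hψ_apply, LinearMap.trace_eq_matrix_trace ℂ b]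
  set f : ℂ → ℂ := fun t => LinearMap.det ((NormedSpace.exp (t • L) : E →L[ℂ] E) : E →ₗ[ℂ] E)
    with hf
  have hf0 : f 0 = 1 := by
    simp [hf, zero_smul, NormedSpace.exp_zero, ContinuousLinearMap.one_def]
  -- derivative at 0
  set u : ℂ → Matrix ι ι ℂ := fun h => ψ (NormedSpace.exp (h • L)) with hu
  set v : ℂ → Matrix ι ι ℂ := fun h => 1 + h • ψ L with hv
  have hfu : ∀ h, f h = (u h).det := fun h => hdet _
  have hw : (fun h : ℂ => NormedSpace.exp (h • L) - 1 - h • L) =o[nhds 0] (fun h : ℂ => h) := by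
    have := (hasDerivAt_exp_smul_const L (0:ℂ)).isLittleO
    simpa [NormedSpace.exp_zero] using this
  have huv : (fun h : ℂ => u h - v h) =o[nhds 0] (fun h : ℂ => h) := by
    have h1 : (fun h : ℂ => u h - v h)
        = fun h => ψ (NormedSpace.exp (h • L) - 1 - h • L) := by
      funext h
      simp only [hu, hv]
      rw [map_sub, map_sub, ContinuousLinearMap.map_smul, hψ_one]
      abel
    rw [h1]
    exact (ψ.isBigO_comp _ _).trans_isLittleO hw
  set R : ℝ := ‖(1 : Matrix ι ι ℂ)‖ + 1 with hR
  have hR0 : (0:ℝ) ≤ R := by positivity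
  have hub : ∀ᶠ h : ℂ in nhds 0, ‖u h‖ ≤ R := by
    have hcont : Continuous u := by
      exact ψ.continuous.comp (NormedSpace.exp_continuous.comp
        (continuous_id.smul continuous_const))
    have hu0 : u 0 = 1 := by simp [hu, NormedSpace.exp_zero, hψ_one]
    have ht : Filter.Tendsto (fun h => ‖u h‖) (nhds 0) (nhds ‖u 0‖) := (hcont.norm.tendsto 0)
    have hlt : ‖u 0‖ < R := by rw [hu0, hR]; exact lt_add_one _
    exact (ht.eventually_lt_const hlt).mono fun x hx => hx.le
  have hvb : ∀ᶠ h : ℂ in nhds 0, ‖v h‖ ≤ R := by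
    have hcont : Continuous v := by
      exact continuous_const.add (continuous_id.smul continuous_const)
    have hv0 : v 0 = 1 := by simp [hv]
    have ht : Filter.Tendsto (fun h => ‖v h‖) (nhds 0) (nhds ‖v 0‖) := (hcont.norm.tendsto 0)
    have hlt : ‖v 0‖ < R := by rw [hv0, hR]; exact lt_add_one _
    exact (ht.eventually_lt_const hlt).mono fun x hx => hx.le
  have hdetO : (fun h : ℂ => (u h).det - (v h).det) =O[nhds 0] (fun h => u h - v h) := by
    refine IsBigO.of_bound (‖detCM ι‖ * (Fintype.card ι : ℝ) * R ^ (Fintype.card ι - 1)) ?_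
    filter_upwards [hub, hvb] with h h1 h2
    exact det_lipschitz R hR0 (u h) (v h) h1 h2
  have o1 : (fun h : ℂ => (u h).det - (v h).det) =o[nhds 0] (fun h : ℂ => h) :=
    hdetO.trans_isLittleO huv
  have o2 : (fun h : ℂ => (v h).det - 1 - h * τ) =o[nhds 0] (fun h : ℂ => h) := by
    have := (hasDerivAt_det_one_add_smul (ψ L)).isLittleO
    simpa [smul_eq_mul, mul_comm] using this
  have h0 : HasDerivAt f τ 0 := by
    rw [hasDerivAt_iff_isLittleO]
    have : (fun h : ℂ => f h - f 0 - (h - 0) • τ)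
        = fun h : ℂ => ((u h).det - (v h).det) + ((v h).det - 1 - h * τ) := by
      funext h
      rw [hfu h, hf0]
      simp [smul_eq_mul]
      ring
    rw [this]
    simpa using o1.add o2
  -- multiplicativity
  have fmul : ∀ s t : ℂ, f (s + t) = f s * f t := by
    intro s t
    have hc : Commute (s • L) (t • L) := ((Commute.refl L).smul_left s).smul_right t
    have : NormedSpace.exp ((s + t) • L)
        = NormedSpace.exp (s • L) * NormedSpace.exp (t • L) := by
      rw [add_smul, NormedSpace.exp_add_of_commute hc]
    rw [hf]
    simp only [this, ContinuousLinearMap.mul_def, ContinuousLinearMap.coe_comp,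
      LinearMap.det_comp]
    exact LinearMap.det_comp _ _
  have hAt : ∀ t : ℂ, HasDerivAt f (τ * f t) t := by
    intro t
    have hsub : HasDerivAt (fun u : ℂ => u - t) 1 t := (hasDerivAt_id t).sub_const t
    have h1 : HasDerivAt (fun u : ℂ => f (u - t)) τ t := by
      have h1' : HasDerivAt (f ∘ fun u : ℂ => u - t) (τ * 1) t :=
        HasDerivAt.comp_of_eq t h0 hsub (by simp)
      simpa [Function.comp_def] using h1'
    have h2 := h1.const_mul (f t)
    have heq : (fun u : ℂ => f t * f (u - t)) = f := by
      funext w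
      rw [← fmul t (w - t), add_sub_cancel]
    rw [heq] at h2
    simpa [mul_comm] using h2
  -- constancy of f t * exp (-(τ * t))
  set g : ℂ → ℂ := fun t => f t * Complex.exp (-(τ * t)) with hg
  have hgderiv : ∀ t : ℂ, HasDerivAt g 0 t := by
    intro t
    have hlin : HasDerivAt (fun t : ℂ => -(τ * t)) (-τ) t := by
      simpa using ((hasDerivAt_id t).const_mul τ).fun_neg
    have he : HasDerivAt (fun t : ℂ => Complex.exp (-(τ * t)))
        (Complex.exp (-(τ * t)) * -τ) t := by
      simpa [Function.comp_def] using (Complex.hasDerivAt_exp (-(τ * t))).comp t hlin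
    have := (hAt t).fun_mul he
    rw [show τ * f t * Complex.exp (-(τ * t)) + f t * (Complex.exp (-(τ * t)) * -τ) = 0 by ring] at this
    exact this
  have hconst : ∀ t : ℂ, g t = g 0 := by
    intro t
    exact is_const_of_deriv_eq_zero (fun s => (hgderiv s).differentiableAt)
      (fun s => (hgderiv s).deriv) t 0
  have hfval : ∀ t : ℂ, f t = Complex.exp (τ * t) := by
    intro t
    have h1 : f t * Complex.exp (-(τ * t)) = 1 := by
      have := hconst t
      simpa [hg, hf0] using this
    have h2 : Complex.exp (-(τ * t)) * Complex.exp (τ * t) = 1 := by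
      rw [← Complex.exp_add]; simp
    calc f t = f t * (Complex.exp (-(τ * t)) * Complex.exp (τ * t)) := by rw [h2, mul_one]
      _ = (f t * Complex.exp (-(τ * t))) * Complex.exp (τ * t) := by ring
      _ = Complex.exp (τ * t) := by rw [h1, one_mul]
  have := hfval 1
  rw [mul_one] at this
  rw [← hτ', ← this, hf]
  norm_num

end AuxDetExp


lemma stdBasis_repr {d : ℕ} (M : Mat d) (p : Fin d × Fin d) :
    (Matrix.stdBasis ℂ (Fin d) (Fin d)).repr M p = M p.1 p.2 := by
  classical
  set b := Matrix.stdBasis ℂ (Fin d) (Fin d) with hb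
  have hsb : ∀ (i j : Fin d) (c : ℂ),
      Matrix.single i j c = c • b (i, j) := by
    intro i j c
    rw [hb, Matrix.stdBasis_eq_single, Matrix.smul_single, smul_eq_mul, mul_one]
  conv_lhs => rw [Matrix.matrix_eq_sum_single M]
  simp only [hsb, map_sum, _root_.map_smul, Module.Basis.repr_self, Finset.sum_apply',
    Finsupp.smul_single', mul_one, Finsupp.single_apply]
  simp [Prod.eq_iff_fst_eq_snd_eq, ite_and, Finset.sum_ite_eq, Finset.sum_ite_eq']

lemma sum_sandwich {d : ℕ} (A B : Mat d) :
    ∑ i : Fin d, ∑ j : Fin d, (A * Matrix.single i j (1:ℂ) * B) i j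
      = A.trace * B.trace := by
  have hentry : ∀ i j : Fin d,
      (A * Matrix.single i j (1:ℂ) * B) i j = A i i * B j j := by
    intro i j
    simp [Matrix.mul_apply, Matrix.single, Matrix.of_apply, ite_and,
      Finset.sum_ite_eq, Finset.mul_sum, Finset.sum_mul]
  simp only [hentry]
  rw [Matrix.trace, Matrix.trace, Finset.sum_mul_sum]
  rfl

lemma sum_sandwich_left {d : ℕ} (B : Mat d) :
    ∑ i : Fin d, ∑ j : Fin d, (Matrix.single i j (1:ℂ) * B) i j
      = (d:ℂ) * B.trace := by
  have := sum_sandwich (1 : Mat d) B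
  simpa [Matrix.trace_one] using this

lemma sum_sandwich_right {d : ℕ} (A : Mat d) :
    ∑ i : Fin d, ∑ j : Fin d, (A * Matrix.single i j (1:ℂ)) i j
      = A.trace * (d:ℂ) := by
  have := sum_sandwich A (1 : Mat d)
  simpa [Matrix.trace_one] using this

lemma trace_lindblad {d m : ℕ}
    (F : Fin m → Mat d)
    (hFtr : ∀ α : Fin m, (F α).trace = 0)
    (hFon : ∀ α β : Fin m, ((F α)ᴴ * F β).trace = if α = β then 1 else 0)
    (H : Mat d)
    (G : Matrix (Fin m) (Fin m) ℂ)
    (L : Mat d →L[ℂ] Mat d)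
    (hL : ∀ ρ : Mat d, L ρ =
      Complex.I • (ρ * H - H * ρ) +
        ∑ α : Fin m, ∑ β : Fin m, G α β •
          (F α * ρ * (F β)ᴴ -
            (2 : ℂ)⁻¹ • ((F β)ᴴ * F α * ρ + ρ * ((F β)ᴴ * F α)))) :
    LinearMap.trace ℂ (Mat d) (L : Mat d →ₗ[ℂ] Mat d) = -(d:ℂ) * G.trace := by
  classical
  set b := Matrix.stdBasis ℂ (Fin d) (Fin d) with hb
  rw [LinearMap.trace_eq_matrix_trace ℂ b, Matrix.trace]
  have hbp : ∀ p : Fin d × Fin d, b p = Matrix.single p.1 p.2 (1:ℂ) := by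
    rintro ⟨i, j⟩
    rw [hb, Matrix.stdBasis_eq_single]
  have hdiag : ∀ p : Fin d × Fin d, (LinearMap.toMatrix b b (L : Mat d →ₗ[ℂ] Mat d)).diag p
      = (L (Matrix.single p.1 p.2 (1:ℂ))) p.1 p.2 := by
    intro p
    rw [Matrix.diag_apply, LinearMap.toMatrix_apply, stdBasis_repr, hbp]
    simp
  simp only [hdiag]
  rw [Fintype.sum_prod_type]
  simp only [hL, Matrix.add_apply, Matrix.sub_apply, Matrix.smul_apply, Matrix.sum_apply,
    smul_eq_mul]
  simp only [Finset.sum_add_distrib]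
  have hS1 : (∑ i : Fin d, ∑ j : Fin d, Complex.I *
      ((Matrix.single i j (1:ℂ) * H) i j - (H * Matrix.single i j (1:ℂ)) i j)) = 0 := by
    simp only [← Finset.mul_sum, Finset.sum_sub_distrib]
    rw [sum_sandwich_left H, sum_sandwich_right H]
    ring
  have swap : ∀ (f : Fin d → Fin d → Fin m → Fin m → ℂ),
      (∑ i : Fin d, ∑ j : Fin d, ∑ α : Fin m, ∑ β : Fin m, f i j α β)
        = ∑ α : Fin m, ∑ β : Fin m, ∑ i : Fin d, ∑ j : Fin d, f i j α β := by
    intro f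
    calc (∑ i : Fin d, ∑ j : Fin d, ∑ α : Fin m, ∑ β : Fin m, f i j α β)
        = ∑ i : Fin d, ∑ α : Fin m, ∑ j : Fin d, ∑ β : Fin m, f i j α β :=
          Finset.sum_congr rfl fun i _ => Finset.sum_comm
      _ = ∑ α : Fin m, ∑ i : Fin d, ∑ j : Fin d, ∑ β : Fin m, f i j α β := Finset.sum_comm
      _ = ∑ α : Fin m, ∑ i : Fin d, ∑ β : Fin m, ∑ j : Fin d, f i j α β :=
          Finset.sum_congr rfl fun α _ => Finset.sum_congr rfl fun i _ => Finset.sum_comm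
      _ = ∑ α : Fin m, ∑ β : Fin m, ∑ i : Fin d, ∑ j : Fin d, f i j α β :=
          Finset.sum_congr rfl fun α _ => Finset.sum_comm
  have hS2 : (∑ i : Fin d, ∑ j : Fin d, ∑ α : Fin m, ∑ β : Fin m,
      G α β * ((F α * Matrix.single i j (1:ℂ) * (F β)ᴴ) i j -
        2⁻¹ * (((F β)ᴴ * F α * Matrix.single i j (1:ℂ)) i j +
          (Matrix.single i j (1:ℂ) * ((F β)ᴴ * F α)) i j)))
      = -(d:ℂ) * G.trace := by
    rw [swap]
    have hinner : ∀ α β : Fin m,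
        (∑ i : Fin d, ∑ j : Fin d, G α β * ((F α * Matrix.single i j (1:ℂ) * (F β)ᴴ) i j -
          2⁻¹ * (((F β)ᴴ * F α * Matrix.single i j (1:ℂ)) i j +
            (Matrix.single i j (1:ℂ) * ((F β)ᴴ * F α)) i j)))
        = G α β * ((-(d:ℂ)) * (if β = α then 1 else 0)) := by
      intro α β
      simp only [← Finset.mul_sum, Finset.sum_sub_distrib, Finset.sum_add_distrib]
      rw [sum_sandwich (F α) ((F β)ᴴ), sum_sandwich_left ((F β)ᴴ * F α),
        sum_sandwich_right ((F β)ᴴ * F α), hFtr α, hFon β α]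
      split_ifs <;> ring
    simp only [hinner]
    have : ∀ α : Fin m, (∑ β : Fin m, G α β * ((-(d:ℂ)) * (if β = α then 1 else 0)))
        = G α α * (-(d:ℂ)) := by
      intro α
      rw [Finset.sum_eq_single α]
      · simp
      · intro β _ hβ; simp [hβ]
      · intro hα; exact absurd (Finset.mem_univ α) hα
    simp only [this]
    rw [Matrix.trace, Finset.mul_sum]
    exact Finset.sum_congr rfl fun α _ => by rw [Matrix.diag_apply]; ring
  rw [hS1, hS2, zero_add]

/-- for a Lindblad (GKLS) generator `L` on `M_d` built from a Hamiltonian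
`H`, traceless orthonormal operators `F_α` and a positive semidefinite matrix `G`,
the determinant of `exp L` equals `exp (-d · tr G)`. -/
theorem det_exp_lindblad {d m : ℕ} (hm : 1 ≤ m)
    (F : Fin m → Mat d)
    (hFtr : ∀ α : Fin m, (F α).trace = 0)
    (hFon : ∀ α β : Fin m, ((F α)ᴴ * F β).trace = if α = β then 1 else 0)
    (H : Mat d) (hH : H.IsHermitian)
    (G : Matrix (Fin m) (Fin m) ℂ) (hG : G.PosSemidef)
    (L : Mat d →L[ℂ] Mat d)
    (hL : ∀ ρ : Mat d, L ρ =
      Complex.I • (ρ * H - H * ρ) +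
        ∑ α : Fin m, ∑ β : Fin m, G α β •
          (F α * ρ * (F β)ᴴ -
            (2 : ℂ)⁻¹ • ((F β)ᴴ * F α * ρ + ρ * ((F β)ᴴ * F α)))) :
    LinearMap.det ((NormedSpace.exp L : Mat d →L[ℂ] Mat d) : Mat d →ₗ[ℂ] Mat d) =
      Complex.exp (-(d : ℂ) * G.trace) := by
  rw [det_exp_clm L, trace_lindblad F hFtr hFon H G L hL]
end
end
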